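/- Let a, b, c be nonnegative integers with a ≤ b ≤ c and let d be an integer with d ≥ c such that P(a,b,c,d) = 0. Then d' = 4abc + 2a + 2b + 2c - d satisfies d' < c; indeed d * d' = (c - a - b)^2 - 4(ab+1) < c^2. -/
import Mathlib


def P (a b c d : ℤ) : ℤ := a^2 + b^2 + c^2 + d^2 - 2*a*b - 2*a*c - 2*a*d - 2*b*c - 2*b*d - 2*c*d - 4*a*b*c*d - 4

theorem stmt_9 (a b c d : ℤ) (ha : 0 ≤ a) (hab : a ≤ b) (hbc : b ≤ c) (hd : c ≤ d)
    (h : P a b c d = 0) :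
    (4*a*b*c + 2*a + 2*b + 2*c - d) < c ∧
    d * (4*a*b*c + 2*a + 2*b + 2*c - d) = (c - a - b)^2 - 4*(a*b+1) ∧
    (c - a - b)^2 - 4*(a*b+1) < c^2 := by
  have hb : 0 ≤ b := ha.trans hab
  have hc : 0 ≤ c := hb.trans hbc
  have hvieta : d * (4*a*b*c + 2*a + 2*b + 2*c - d) = (c - a - b)^2 - 4*(a*b+1) := by
    unfold P at h; nlinarith [h]
  have hsq : (c - a - b)^2 ≤ c^2 := by nlinarith
  have hprod : (c - a - b)^2 - 4*(a*b+1) < c^2 := by nlinarith [mul_nonneg ha hb]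
  have hdpos : 0 < d := by
    by_contra hnd
    push_neg at hnd
    have hc0 : c = 0 := le_antisymm (hd.trans hnd) hc
    have hb0 : b = 0 := le_antisymm (hbc.trans_eq hc0) hb
    have ha0 : a = 0 := le_antisymm (hab.trans_eq hb0) ha
    have hd0 : d = 0 := le_antisymm hnd (hc0 ▸ hd)
    simp [P, ha0, hb0, hc0, hd0] at h
  refine ⟨?_, hvieta, hprod⟩
  have : d * (4*a*b*c + 2*a + 2*b + 2*c - d) < d * c := by
    calc d * (4*a*b*c + 2*a + 2*b + 2*c - d) = (c - a - b)^2 - 4*(a*b+1) := hvieta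
    _ < c^2 := hprod
    _ ≤ d * c := by nlinarith
  exact lt_of_mul_lt_mul_left this hdpos.le
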